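/- The first absolute moment of the Mellin–Fejér kernel is infinite: M₁(F⁰₁) := sup_{x>0} ∑_{k∈ℤ} F⁰₁(e^{-k}x) |k − log x| = +∞; indeed already for x with log x ∉ ℤ the series ∑_k sin²((log x − k)/2)/|log x − k| diverges. -/

import Mathlib

open Real

/-- `sinc u = sin(πu)/(πu)`, `sinc 0 = 1`. -/
noncomputable def sinc (u : ℝ) : ℝ :=
  if u = 0 then 1 else Real.sin (π * u) / (π * u)

/-- The Mellin–Fejér kernel with `c = 0`, `ρ = 1`. -/
noncomputable def mellinFejer01 (x : ℝ) : ℝ :=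
  1 / (2 * π) * _root_.sinc (Real.log (Real.sqrt x) / π) ^ 2

lemma key_sin (a : ℝ) :
    2 * Real.sin (1/4) ^ 2 ≤ Real.sin a ^ 2 + Real.sin (a + 1/2) ^ 2 := by
  have h1 : Real.sin (a + 1/2) - Real.sin a = 2 * Real.sin (1/4) * Real.cos (a + 1/4) := by
    rw [Real.sin_sub_sin, show (a + 1/2 - a) / 2 = (1/4 : ℝ) by ring,
      show (a + 1/2 + a) / 2 = a + 1/4 by ring]
  have h2 : Real.sin (a + 1/2) + Real.sin a = 2 * Real.sin (a + 1/4) * Real.cos (1/4) := by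
    have := Real.sin_sub_sin (a + 1/2) (-a)
    rw [Real.sin_neg, show (a + 1/2 - -a) / 2 = a + 1/4 by ring,
      show (a + 1/2 + -a) / 2 = (1/4 : ℝ) by ring] at this
    linarith
  have h1s : (Real.sin (a + 1/2) - Real.sin a) ^ 2
      = 4 * Real.sin (1/4) ^ 2 * Real.cos (a + 1/4) ^ 2 := by rw [h1]; ring
  have h2s : (Real.sin (a + 1/2) + Real.sin a) ^ 2
      = 4 * Real.sin (a + 1/4) ^ 2 * Real.cos (1/4) ^ 2 := by rw [h2]; ring
  have h3 := Real.sin_sq_add_cos_sq (a + 1/4)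
  have h4 := Real.sin_sq_add_cos_sq (1/4 : ℝ)
  have h5 : Real.sin (1/4:ℝ) < 1/4 := Real.sin_lt (by norm_num)
  have h6 : 0 < Real.sin (1/4:ℝ) :=
    Real.sin_pos_of_pos_of_lt_pi (by norm_num) (by linarith [Real.pi_gt_three])
  have hcs : Real.sin (1/4:ℝ) ^ 2 ≤ Real.cos (1/4:ℝ) ^ 2 := by nlinarith
  nlinarith [mul_nonneg (sq_nonneg (Real.sin (a + 1/4)))
    (sub_nonneg.mpr hcs), sq_nonneg (Real.cos (a + 1/4))]

lemma not_summable_g (L : ℝ) (hL : ∀ k : ℤ, L ≠ k) :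
    ¬ Summable (fun k : ℤ => Real.sin ((L - k) / 2) ^ 2 / |L - (k : ℝ)|) := by
  intro hs
  set g : ℤ → ℝ := fun k => Real.sin ((L - k) / 2) ^ 2 / |L - (k : ℝ)| with hg
  have hinj0 : Function.Injective (fun n : ℕ => (2 * n : ℤ)) := by
    intro a b h; simpa using h
  have hinj1 : Function.Injective (fun n : ℕ => (2 * n + 1 : ℤ)) := by
    intro a b h; simpa using h
  have h0 : Summable (fun n : ℕ => g (2 * n)) := hs.comp_injective hinj0
  have h1 : Summable (fun n : ℕ => g (2 * n + 1)) := hs.comp_injective hinj1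
  have hsum : Summable (fun n : ℕ => g (2 * n) + g (2 * n + 1)) := h0.add h1
  set C : ℝ := 2 * Real.sin (1/4) ^ 2 with hC
  have hCpos : 0 < C := by
    have h6 : 0 < Real.sin (1/4:ℝ) :=
      Real.sin_pos_of_pos_of_lt_pi (by norm_num) (by linarith [Real.pi_gt_three])
    positivity
  have hDpos : (0:ℝ) < |L| + 2 := by positivity
  have key : ∀ n : ℕ, C / ((|L| + 2) * (n + 1)) ≤ g (2 * n) + g (2 * n + 1) := by
    intro n
    set a : ℝ := (L - (2 * n + 1)) / 2 with ha
    have hden : (0:ℝ) < (|L| + 2) * (n + 1) := by positivity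
    have hd0 : (0:ℝ) < |L - ((2 * n : ℤ) : ℝ)| := by
      rw [abs_pos, sub_ne_zero]; exact hL (2 * n)
    have hd1 : (0:ℝ) < |L - ((2 * n + 1 : ℤ) : ℝ)| := by
      rw [abs_pos, sub_ne_zero]; exact hL (2 * n + 1)
    have hLnn : (0:ℝ) ≤ |L| := abs_nonneg L
    have hn : (0:ℝ) ≤ n := Nat.cast_nonneg n
    have hb0 : |L - ((2 * n : ℤ) : ℝ)| ≤ (|L| + 2) * (n + 1) := by
      have h2 : |((2 * n : ℤ) : ℝ)| = 2 * n := by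
        push_cast; rw [abs_of_nonneg]; positivity
      calc |L - ((2 * n : ℤ) : ℝ)| ≤ |L| + |((2 * n : ℤ) : ℝ)| := abs_sub _ _
        _ = |L| + 2 * n := by rw [h2]
        _ ≤ (|L| + 2) * (n + 1) := by nlinarith
    have hb1 : |L - ((2 * n + 1 : ℤ) : ℝ)| ≤ (|L| + 2) * (n + 1) := by
      have h2 : |((2 * n + 1 : ℤ) : ℝ)| = 2 * n + 1 := by
        push_cast; rw [abs_of_nonneg]; positivity
      calc |L - ((2 * n + 1 : ℤ) : ℝ)| ≤ |L| + |((2 * n + 1 : ℤ) : ℝ)| := abs_sub _ _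
        _ = |L| + (2 * n + 1) := by rw [h2]
        _ ≤ (|L| + 2) * (n + 1) := by nlinarith
    have e0 : g (2 * n) = Real.sin (a + 1/2) ^ 2 / |L - ((2 * n : ℤ) : ℝ)| := by
      simp only [hg, ha]
      congr 2
      push_cast; ring
    have e1 : g (2 * n + 1) = Real.sin a ^ 2 / |L - ((2 * n + 1 : ℤ) : ℝ)| := by
      simp only [hg, ha]
      congr 2
      push_cast; ring
    have t0 : Real.sin (a + 1/2) ^ 2 / ((|L| + 2) * (n + 1)) ≤ g (2 * n) := by
      rw [e0]; gcongr
    have t1 : Real.sin a ^ 2 / ((|L| + 2) * (n + 1)) ≤ g (2 * n + 1) := by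
      rw [e1]; gcongr
    have hk := key_sin a
    calc C / ((|L| + 2) * (n + 1))
        ≤ (Real.sin a ^ 2 + Real.sin (a + 1/2) ^ 2) / ((|L| + 2) * (n + 1)) := by gcongr
      _ = Real.sin a ^ 2 / ((|L| + 2) * (n + 1))
            + Real.sin (a + 1/2) ^ 2 / ((|L| + 2) * (n + 1)) := by ring
      _ ≤ g (2 * n + 1) + g (2 * n) := add_le_add t1 t0
      _ = g (2 * n) + g (2 * n + 1) := by ring
  have hlow : Summable (fun n : ℕ => C / ((|L| + 2) * (n + 1))) :=
    Summable.of_nonneg_of_le (fun n => by positivity) key hsum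
  have h1div : Summable (fun n : ℕ => 1 / ((n : ℝ) + 1)) := by
    have := hlow.mul_left ((|L| + 2) / C)
    convert this using 2 with n
    case e'_3 => rfl
    have := hCpos.ne'; have := hDpos.ne'
    field_simp
  exact (mt (summable_nat_add_iff (f := fun n : ℕ => 1 / (n : ℝ)) 1).mp
    Real.not_summable_one_div_natCast) (by simpa using h1div)

/-- The first absolute moment of the Mellin–Fejér kernel is infinite: for every `x > 0`
with `log x ∉ ℤ`, the series defining `M₁(F⁰₁, x)` diverges. -/
theorem mellinFejer01_first_moment_infinite :
    ∀ x : ℝ, 0 < x → (∀ k : ℤ, Real.log x ≠ k) →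
      ¬ Summable (fun k : ℤ =>
          mellinFejer01 (Real.exp (-k) * x) * |(k : ℝ) - Real.log x|) ∧
      ¬ Summable (fun k : ℤ =>
          Real.sin ((Real.log x - k) / 2) ^ 2 / |Real.log x - (k : ℝ)|) := by
  intro x hx hL
  set L : ℝ := Real.log x with hLdef
  have hng := not_summable_g L hL
  refine ⟨?_, hng⟩
  intro hf
  apply hng
  have heq : ∀ k : ℤ,
      mellinFejer01 (Real.exp (-k) * x) * |(k : ℝ) - L| =
      (2 / π) * (Real.sin ((L - k) / 2) ^ 2 / |L - (k : ℝ)|) := by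
    intro k
    have hy : (0:ℝ) < Real.exp (-k) * x := mul_pos (Real.exp_pos _) hx
    have hlog : Real.log (Real.sqrt (Real.exp (-k) * x)) = (L - k) / 2 := by
      rw [Real.log_sqrt hy.le, Real.log_mul (Real.exp_ne_zero _) (ne_of_gt hx),
        Real.log_exp]
      ring
    have hs0 : (L - (k:ℝ)) ≠ 0 := sub_ne_zero.mpr (hL k)
    have hpi : (π : ℝ) ≠ 0 := Real.pi_ne_zero
    have hu : (L - (k:ℝ)) / 2 / π ≠ 0 :=
      div_ne_zero (div_ne_zero hs0 two_ne_zero) hpi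
    have harg : π * ((L - (k:ℝ)) / 2 / π) = (L - (k:ℝ)) / 2 := by field_simp
    have hsinc : _root_.sinc ((L - (k:ℝ)) / 2 / π) =
        Real.sin ((L - (k:ℝ)) / 2) / ((L - (k:ℝ)) / 2) := by
      rw [_root_.sinc, if_neg hu, harg]
    rw [mellinFejer01, hlog, hsinc, abs_sub_comm ((k:ℝ)) L]
    have habs : |L - (k:ℝ)| ≠ 0 := abs_ne_zero.mpr hs0
    rw [div_pow, show ((L - (k:ℝ)) / 2) ^ 2 = |L - (k:ℝ)| ^ 2 / 4 by rw [sq_abs]; ring]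
    field_simp
    ring
  have hsg := hf.mul_left (π / 2)
  convert hsg using 2 with k
  case e'_3 => rfl
  rw [heq k]
  have hs0 : (L - (k:ℝ)) ≠ 0 := sub_ne_zero.mpr (hL k)
  have habs : |L - (k:ℝ)| ≠ 0 := abs_ne_zero.mpr hs0
  field_simp
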